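/- Let A be a finite subset of ℤ^d and F ⊆ A a subset. Then the simplicial volume of F (computed in the lattice ℤF it spans) does not exceed the simplicial volume of A (computed in ℤA). -/

import Mathlib

open MeasureTheory

/-- The simplicial volume of a finite set `G ⊆ ℤ^d`: the Euclidean volume of the convex hull
of `G ∪ {0}`, computed in coordinates given by a basis of the lattice `ℤG` spanned by `G`,
normalized by the volume `1/r!` of the standard `r`-simplex (`r = rank ℤG`). -/
noncomputable def simpVol {d : ℕ} (G : Finset (Fin d → ℤ)) : ℝ :=
  haveI : Module.Finite ℤ (Submodule.span ℤ ((G : Set (Fin d → ℤ)))) :=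
    Module.Finite.span_of_finite ℤ G.finite_toSet
  let L : Submodule ℤ (Fin d → ℤ) := Submodule.span ℤ ((G : Set (Fin d → ℤ)))
  let b := Module.Free.chooseBasis ℤ L
  let coord : (Fin d → ℤ) → (Module.Free.ChooseBasisIndex ℤ L → ℝ) :=
    fun v => haveI := Classical.dec (v ∈ L)
      if h : v ∈ L then (fun i => ((b.repr ⟨v, h⟩) i : ℝ)) else 0
  (Nat.factorial (Module.finrank ℤ L)) *
    (volume (convexHull ℝ (coord '' (insert (0 : Fin d → ℤ) (G : Set (Fin d → ℤ)))))).toReal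

namespace SimpVolAux

open Module Module.Free Submodule Set Pointwise

variable {d : ℕ}

/-- Coordinates w.r.t. a basis of a submodule. -/
noncomputable def coordOf {L : Submodule ℤ (Fin d → ℤ)} {ι : Type*} [Fintype ι]
    (b : Basis ι ℤ L) : (Fin d → ℤ) → (ι → ℝ) :=
  fun v => haveI := Classical.dec (v ∈ L)
    if h : v ∈ L then (fun i => ((b.repr ⟨v, h⟩) i : ℝ)) else 0

lemma coordOf_apply {L : Submodule ℤ (Fin d → ℤ)} {ι : Type*} [Fintype ι]
    (b : Basis ι ℤ L) {v : Fin d → ℤ} (h : v ∈ L) :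
    coordOf b v = fun i => ((b.repr ⟨v, h⟩) i : ℝ) := by
  simp only [coordOf, dif_pos h]

lemma simpVol_def (G : Finset (Fin d → ℤ)) :
    haveI : Module.Finite ℤ (Submodule.span ℤ ((G : Set (Fin d → ℤ)))) :=
      Module.Finite.span_of_finite ℤ G.finite_toSet
    simpVol G = (Nat.factorial (finrank ℤ (Submodule.span ℤ ((G : Set (Fin d → ℤ)))))) *
      (volume (convexHull ℝ ((coordOf (chooseBasis ℤ (Submodule.span ℤ ((G : Set (Fin d → ℤ)))))) ''
        (insert (0 : Fin d → ℤ) (G : Set (Fin d → ℤ)))))).toReal := rfl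

section Trans

variable {L L' : Submodule ℤ (Fin d → ℤ)} {ι ι' : Type*} [Fintype ι] [Fintype ι']

/-- Transition matrix between a basis of `L` and a basis of `L' ⊇ L`. -/
noncomputable def transMat (h : L ≤ L') (b : Basis ι ℤ L) (b' : Basis ι' ℤ L') :
    Matrix ι' ι ℤ :=
  fun i' i => b'.repr ⟨(b i : Fin d → ℤ), h (b i).2⟩ i'

lemma transMat_mulVec (h : L ≤ L') (b : Basis ι ℤ L) (b' : Basis ι' ℤ L') (x : ι → ℤ)
    {w : Fin d → ℤ} (hw : w ∈ L') (hrep : w = ∑ i, x i • ((b i : Fin d → ℤ))) :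
    Matrix.mulVec (transMat h b b') x = ⇑(b'.repr ⟨w, hw⟩) := by
  have hsub : (⟨w, hw⟩ : L') = ∑ i, x i • (⟨(b i : Fin d → ℤ), h (b i).2⟩ : L') := by
    apply Subtype.ext
    push_cast [hrep]
    rfl
  funext i'
  rw [hsub]
  simp only [map_sum, _root_.map_smul]
  simp only [Matrix.mulVec, dotProduct, transMat, Finsupp.coe_finset_sum,
    Finset.sum_apply, Finsupp.coe_smul, Pi.smul_apply, smul_eq_mul, mul_comm]

lemma coordOf_transition (h : L ≤ L') (b : Basis ι ℤ L) (b' : Basis ι' ℤ L')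
    {v : Fin d → ℤ} (hv : v ∈ L) :
    coordOf b' v = Matrix.mulVec ((transMat h b b').map (fun z : ℤ => (z : ℝ))) (coordOf b v) := by
  have hrep : v = ∑ i, (b.repr ⟨v, hv⟩ i) • ((b i : Fin d → ℤ)) := by
    have := b.sum_repr ⟨v, hv⟩
    calc v = ((⟨v, hv⟩ : L) : Fin d → ℤ) := rfl
    _ = (((∑ i, b.repr ⟨v, hv⟩ i • b i : L)) : Fin d → ℤ) := by rw [this]
    _ = _ := by push_cast; rfl
  have key := transMat_mulVec h b b' (fun i => b.repr ⟨v, hv⟩ i) (h hv) hrep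
  rw [coordOf_apply b' (h hv), coordOf_apply b hv]
  funext i'
  have : (b'.repr ⟨v, h hv⟩) i' = (Matrix.mulVec (transMat h b b') (fun i => b.repr ⟨v, hv⟩ i)) i' := by
    rw [key]
  rw [this]
  simp only [Matrix.mulVec, dotProduct, Matrix.map_apply]
  push_cast
  rfl

end Trans

section VolLe

variable {L L' : Submodule ℤ (Fin d → ℤ)} {ι ι' : Type*} [Fintype ι] [Fintype ι']
  [DecidableEq ι']

/-- Key comparison: if `L ≤ L'` have bases of the same (finite) cardinality, the volume of the
convex hull in coordinates can only grow when passing from `X ⊆ L` to `Y ⊇ X`. -/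
lemma vol_le (h : L ≤ L') (b : Basis ι ℤ L) (b' : Basis ι' ℤ L') (e : ι ≃ ι')
    {X Y : Set (Fin d → ℤ)} (hX : X.Finite) (hXL : ∀ v ∈ X, v ∈ L) (hXY : X ⊆ Y) :
    volume (convexHull ℝ (coordOf b '' X)) ≤ volume (convexHull ℝ (coordOf b' '' Y)) := by
  classical
  -- the reindexing map, a measure-preserving linear map
  set ρ : (ι → ℝ) →ₗ[ℝ] (ι' → ℝ) := LinearMap.funLeft ℝ ℝ ⇑e.symm with hρ
  have hρcoe : ⇑ρ = ⇑(MeasurableEquiv.piCongrLeft (fun _ : ι' => ℝ) e) := by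
    funext x j
    obtain ⟨i, rfl⟩ := e.surjective j
    rw [MeasurableEquiv.piCongrLeft_apply_apply]
    simp [hρ, LinearMap.funLeft_apply]
  have hρvol : ∀ s : Set (ι → ℝ), MeasurableSet s → volume (⇑ρ '' s) = volume s := by
    intro s hs
    rw [hρcoe, MeasurableEquiv.image_eq_preimage_symm]
    exact ((volume_measurePreserving_piCongrLeft (fun _ : ι' => ℝ) e).symm
      (MeasurableEquiv.piCongrLeft (fun _ : ι' => ℝ) e)).measure_preimage hs.nullMeasurableSet
  -- the square transition matrix
  set N : Matrix ι' ι' ℤ := (transMat h b b').submatrix id ⇑e.symm with hN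
  have submat : ∀ {R : Type} [CommRing R] (M : Matrix ι' ι R) (y : ι' → R),
      Matrix.mulVec (M.submatrix id ⇑e.symm) y = Matrix.mulVec M (y ∘ ⇑e) := by
    intro R _ M y
    funext i'
    simp only [Matrix.mulVec, dotProduct, Matrix.submatrix_apply, id_eq]
    exact (Fintype.sum_equiv e (fun i => M i' i * (y ∘ ⇑e) i)
      (fun j' => M i' (e.symm j') * y j') (by intro i; simp)).symm
  have hdet : N.det ≠ 0 := by
    intro h0
    obtain ⟨y, hy0, hyN⟩ := Matrix.exists_mulVec_eq_zero_iff.mpr h0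
    set x : ι → ℤ := y ∘ ⇑e with hxdef
    have hmem : (∑ i, x i • ((b i : Fin d → ℤ))) ∈ L' :=
      Submodule.sum_mem _ (fun i _ => Submodule.smul_mem _ _ (h (b i).2))
    have hkey := transMat_mulVec h b b' x hmem rfl
    have hx0 : Matrix.mulVec (transMat h b b') x = 0 := by
      rw [hN] at hyN; rw [← submat]; exact hyN
    have hz : (⟨∑ i, x i • ((b i : Fin d → ℤ)), hmem⟩ : L') = 0 := by
      have : ⇑(b'.repr (⟨∑ i, x i • ((b i : Fin d → ℤ)), hmem⟩ : L')) = 0 := by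
        rw [← hkey, hx0]
      have h2 : b'.repr (⟨∑ i, x i • ((b i : Fin d → ℤ)), hmem⟩ : L') = 0 :=
        Finsupp.ext (fun i' => congrFun this i')
      exact b'.repr.map_eq_zero_iff.mp h2
    have hsumL : (∑ i, x i • b i : L) = 0 := by
      apply Subtype.ext
      have := congrArg Subtype.val hz
      push_cast at this ⊢
      simpa using this
    have hx : x = 0 := by
      have := b.repr_sum_self x
      rw [hsumL] at this
      simpa using this.symm
    apply hy0
    funext j'
    have := congrFun hx (e.symm j')
    simpa [hxdef] using this
  set Mr : Matrix ι' ι' ℝ := N.map (fun z : ℤ => (z : ℝ)) with hMr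
  set g : (ι' → ℝ) →ₗ[ℝ] (ι' → ℝ) := Matrix.toLin' Mr with hg
  have hgdet : (1 : ℝ) ≤ |LinearMap.det g| := by
    rw [hg, LinearMap.det_toLin']
    have : Mr.det = ((N.det : ℤ) : ℝ) := by
      rw [hMr]
      exact ((Int.castRingHom ℝ).map_det N).symm
    rw [this, ← Int.cast_abs]
    exact_mod_cast Int.one_le_abs (by simpa using hdet)
  have himage : coordOf b' '' X = g '' (⇑ρ '' (coordOf b '' X)) := by
    rw [Set.image_image, Set.image_image]
    apply Set.image_congr
    intro v hv
    rw [coordOf_transition h b b' (hXL v hv), hg, Matrix.toLin'_apply]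
    have hMr2 : Mr = ((transMat h b b').map (fun z : ℤ => (z : ℝ))).submatrix id ⇑e.symm := rfl
    rw [hMr2, submat]
    have hcomp : (ρ (coordOf b v)) ∘ ⇑e = coordOf b v := by
      funext i
      simp [hρ, LinearMap.funLeft_apply]
    rw [hcomp]
  -- measurability facts
  have hXfin : (coordOf b '' X).Finite := hX.image _
  have hmeas : MeasurableSet (convexHull ℝ (coordOf b '' X)) :=
    (hXfin.isCompact_convexHull ℝ).isClosed.measurableSet
  calc volume (convexHull ℝ (coordOf b '' X))
      ≤ ENNReal.ofReal |LinearMap.det g| * volume (convexHull ℝ (coordOf b '' X)) := by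
        refine le_mul_of_one_le_left zero_le ?_
        rw [show (1 : ENNReal) = ENNReal.ofReal 1 by simp]
        exact ENNReal.ofReal_le_ofReal hgdet
    _ = ENNReal.ofReal |LinearMap.det g| * volume (⇑ρ '' convexHull ℝ (coordOf b '' X)) := by
        rw [hρvol _ hmeas]
    _ = volume (g '' (⇑ρ '' convexHull ℝ (coordOf b '' X))) := by
        rw [MeasureTheory.Measure.addHaar_image_linearMap]
    _ = volume (convexHull ℝ (coordOf b' '' X)) := by
        rw [himage]
        rw [← LinearMap.image_convexHull, ← LinearMap.image_convexHull]
    _ ≤ volume (convexHull ℝ (coordOf b' '' Y)) := by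
        exact measure_mono (convexHull_mono (Set.image_mono hXY))

end VolLe

lemma simpVol_eq_basis (G : Finset (Fin d → ℤ)) {ι : Type*} [Fintype ι]
    (c : Basis ι ℤ (Submodule.span ℤ ((G : Set (Fin d → ℤ))))) :
    simpVol G = (Nat.factorial (Fintype.card ι)) *
      (volume (convexHull ℝ ((coordOf c) ''
        (insert (0 : Fin d → ℤ) (G : Set (Fin d → ℤ)))))).toReal := by
  classical
  haveI : Module.Finite ℤ (Submodule.span ℤ ((G : Set (Fin d → ℤ)))) :=
    Module.Finite.span_of_finite ℤ G.finite_toSet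
  have hcard : finrank ℤ (Submodule.span ℤ ((G : Set (Fin d → ℤ)))) = Fintype.card ι :=
    Module.finrank_eq_card_basis c
  have hcard' : finrank ℤ (Submodule.span ℤ ((G : Set (Fin d → ℤ)))) =
      Fintype.card (ChooseBasisIndex ℤ (Submodule.span ℤ ((G : Set (Fin d → ℤ))))) :=
    Module.finrank_eq_card_chooseBasisIndex ℤ _
  have e : ChooseBasisIndex ℤ (Submodule.span ℤ ((G : Set (Fin d → ℤ)))) ≃ ι :=
    Fintype.equivOfCardEq (by rw [← hcard, ← hcard'])
  have hXfin : (insert (0 : Fin d → ℤ) (G : Set (Fin d → ℤ))).Finite := (G.finite_toSet).insert _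
  have hXL : ∀ v ∈ insert (0 : Fin d → ℤ) (G : Set (Fin d → ℤ)),
      v ∈ Submodule.span ℤ ((G : Set (Fin d → ℤ))) := by
    intro v hv
    rcases hv with rfl | hv
    · exact zero_mem _
    · exact Submodule.subset_span hv
  have hvol : volume (convexHull ℝ
        (coordOf (chooseBasis ℤ (Submodule.span ℤ ((G : Set (Fin d → ℤ))))) ''
          (insert (0 : Fin d → ℤ) (G : Set (Fin d → ℤ))))) =
      volume (convexHull ℝ (coordOf c '' (insert (0 : Fin d → ℤ) (G : Set (Fin d → ℤ))))) :=
    le_antisymm (vol_le le_rfl _ c e hXfin hXL subset_rfl)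
      (vol_le le_rfl c _ e.symm hXfin hXL subset_rfl)
  rw [simpVol_def, hcard, hvol]

lemma simpVol_le_of_rank_eq (F G : Finset (Fin d → ℤ)) (hFG : F ⊆ G)
    (hr : finrank ℤ (Submodule.span ℤ ((F : Set (Fin d → ℤ)))) =
      finrank ℤ (Submodule.span ℤ ((G : Set (Fin d → ℤ))))) :
    simpVol F ≤ simpVol G := by
  classical
  haveI : Module.Finite ℤ (Submodule.span ℤ ((F : Set (Fin d → ℤ)))) :=
    Module.Finite.span_of_finite ℤ F.finite_toSet
  haveI : Module.Finite ℤ (Submodule.span ℤ ((G : Set (Fin d → ℤ)))) :=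
    Module.Finite.span_of_finite ℤ G.finite_toSet
  set L := Submodule.span ℤ ((F : Set (Fin d → ℤ))) with hL
  set L' := Submodule.span ℤ ((G : Set (Fin d → ℤ))) with hL'
  have hLL' : L ≤ L' := Submodule.span_mono (Finset.coe_subset.mpr hFG)
  set b := chooseBasis ℤ L with hb
  set b' := chooseBasis ℤ L' with hb'
  have e : ChooseBasisIndex ℤ L ≃ ChooseBasisIndex ℤ L' := by
    apply Fintype.equivOfCardEq
    rw [← Module.finrank_eq_card_chooseBasisIndex ℤ L, ← Module.finrank_eq_card_chooseBasisIndex ℤ L']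
    exact hr
  have hXL : ∀ v ∈ insert (0 : Fin d → ℤ) (F : Set (Fin d → ℤ)), v ∈ L := by
    intro v hv
    rcases hv with rfl | hv
    · exact zero_mem L
    · exact Submodule.subset_span hv
  have hvol := vol_le hLL' b b' e ((F.finite_toSet).insert _) hXL
    (Set.insert_subset_insert (Finset.coe_subset.mpr hFG))
  rw [simpVol_def, simpVol_def, hr]
  apply mul_le_mul_of_nonneg_left _ (by positivity)
  apply ENNReal.toReal_mono
  · exact (((G.finite_toSet).insert _).image _ |>.isCompact_convexHull ℝ |>.measure_lt_top).ne
  · exact hvol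

/-- cone volume formula -/
lemma cone_vol {ι : Type*} [Fintype ι] (S : Set (ι → ℝ)) (hS : S.Finite) (h0 : (0 : ι → ℝ) ∈ S) :
    volume (convexHull ℝ (insert ((1 : ℝ), (0 : ι → ℝ)) ((fun x => ((0 : ℝ), x)) '' S)))
      = ENNReal.ofReal (1 / (Fintype.card ι + 1)) * volume (convexHull ℝ S) := by
  classical
  set n := Fintype.card ι with hn
  set B := convexHull ℝ S with hB
  have hBne : B.Nonempty := ⟨0, subset_convexHull ℝ S h0⟩
  set inrL : (ι → ℝ) →ₗ[ℝ] ℝ × (ι → ℝ) := LinearMap.inr ℝ ℝ (ι → ℝ) with hinrL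
  have hinr : (fun x : ι → ℝ => ((0 : ℝ), x)) '' S = ⇑inrL '' S := rfl
  rw [hinr]
  set D := convexHull ℝ (insert ((1 : ℝ), (0 : ι → ℝ)) (⇑inrL '' S)) with hD
  have hDdesc : D = convexJoin ℝ {((1 : ℝ), (0 : ι → ℝ))} (⇑inrL '' B) := by
    rw [hD, convexHull_insert ⟨_, Set.mem_image_of_mem _ h0⟩, LinearMap.image_convexHull]
  have hslice : ∀ t : ℝ, Prod.mk t ⁻¹' D =
      if t ∈ Set.Icc (0 : ℝ) 1 then (1 - t) • B else (∅ : Set (ι → ℝ)) := by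
    intro t
    ext x
    simp only [Set.mem_preimage, hDdesc, mem_convexJoin, Set.mem_singleton_iff]
    constructor
    · rintro ⟨p, rfl, q, ⟨y, hy, rfl⟩, hseg⟩
      obtain ⟨u, v, hu, hv, huv, heq⟩ := hseg
      have h1 : u = t := by
        have := congrArg Prod.fst heq
        simpa [hinrL] using this
      have h2 : v • y = x := by
        have := congrArg Prod.snd heq
        simpa [hinrL] using this
      have ht : t ∈ Set.Icc (0 : ℝ) 1 := ⟨h1 ▸ hu, by nlinarith⟩
      rw [if_pos ht]
      have hv' : v = 1 - t := by rw [← h1]; linarith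
      exact ⟨y, hy, hv' ▸ h2⟩
    · intro hx
      by_cases ht : t ∈ Set.Icc (0 : ℝ) 1
      · rw [if_pos ht] at hx
        obtain ⟨y, hy, rfl⟩ := hx
        refine ⟨_, rfl, inrL y, Set.mem_image_of_mem _ hy, t, 1 - t, ht.1, by linarith [ht.2],
          by ring, ?_⟩
        apply Prod.ext
        · simp [hinrL]
        · simp [hinrL]
      · rw [if_neg ht] at hx
        exact absurd hx (Set.notMem_empty x)
  have hDmeas : MeasurableSet D :=
    (((hS.image _).insert _).isCompact_convexHull ℝ).isClosed.measurableSet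
  have hvol : volume D = ∫⁻ t, volume (Prod.mk t ⁻¹' D) := by
    rw [MeasureTheory.Measure.volume_eq_prod, MeasureTheory.Measure.prod_apply hDmeas]
  have hfinrank : finrank ℝ (ι → ℝ) = n := by
    rw [Module.finrank_pi]
  have hptwise : ∀ t : ℝ, volume (Prod.mk t ⁻¹' D) =
      Set.indicator (Set.Icc (0 : ℝ) 1) (fun t => ENNReal.ofReal ((1 - t) ^ n) * volume B) t := by
    intro t
    rw [hslice t]
    by_cases ht : t ∈ Set.Icc (0 : ℝ) 1
    · rw [if_pos ht, Set.indicator_of_mem ht,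
        MeasureTheory.Measure.addHaar_smul_of_nonneg volume (by linarith [ht.2]) B, hfinrank]
    · rw [if_neg ht, Set.indicator_of_notMem ht]
      simp
  have hcore : (∫⁻ t in Set.Icc (0 : ℝ) 1, ENNReal.ofReal ((1 - t) ^ n)) =
      ENNReal.ofReal (1 / (n + 1)) := by
    rw [← MeasureTheory.ofReal_integral_eq_lintegral_ofReal]
    · congr 1
      rw [MeasureTheory.integral_Icc_eq_integral_Ioc,
        ← intervalIntegral.integral_of_le zero_le_one,
        show (fun t : ℝ => (1 - t) ^ n) = (fun t : ℝ => (fun u : ℝ => u ^ n) (1 - t)) from rfl,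
        intervalIntegral.integral_comp_sub_left (fun u : ℝ => u ^ n) 1]
      simp [integral_pow]
    · exact ((continuous_const.sub continuous_id).pow n).integrableOn_Icc
    · filter_upwards [MeasureTheory.ae_restrict_mem measurableSet_Icc] with t ht
      have h1t : (0 : ℝ) ≤ 1 - t := by linarith [ht.2]
      positivity
  rw [hvol]
  simp_rw [hptwise]
  rw [MeasureTheory.lintegral_indicator measurableSet_Icc,
    MeasureTheory.lintegral_mul_const _ (by
      apply ENNReal.measurable_ofReal.comp
      exact ((continuous_const.sub continuous_id).pow n).measurable), hcore]

lemma simpVol_le_insert (F : Finset (Fin d → ℤ)) (a : Fin d → ℤ) :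
    simpVol F ≤ simpVol (insert a F) := by
  classical
  haveI : Module.Finite ℤ (Submodule.span ℤ ((F : Set (Fin d → ℤ)))) :=
    Module.Finite.span_of_finite ℤ F.finite_toSet
  haveI : Module.Finite ℤ (Submodule.span ℤ (((insert a F : Finset (Fin d → ℤ)) : Set (Fin d → ℤ)))) :=
    Module.Finite.span_of_finite ℤ (insert a F).finite_toSet
  by_cases hr : finrank ℤ (Submodule.span ℤ ((F : Set (Fin d → ℤ)))) =
      finrank ℤ (Submodule.span ℤ (((insert a F : Finset (Fin d → ℤ)) : Set (Fin d → ℤ))))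
  · exact simpVol_le_of_rank_eq F (insert a F) (Finset.subset_insert a F) hr
  -- the rank jumps: `a` is not in the rational span of `F`
  set L : Submodule ℤ (Fin d → ℤ) := Submodule.span ℤ ((F : Set (Fin d → ℤ))) with hLdef
  set L' : Submodule ℤ (Fin d → ℤ) :=
    Submodule.span ℤ (((insert a F : Finset (Fin d → ℤ)) : Set (Fin d → ℤ))) with hL'def
  have hL'eq : L' = (ℤ ∙ a) ⊔ L := by rw [hL'def, Finset.coe_insert, Submodule.span_insert]
  have hLL' : L ≤ L' := by rw [hL'eq]; exact le_sup_right
  have haL' : a ∈ L' := by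
    rw [hL'eq]
    exact Submodule.mem_sup_left (Submodule.mem_span_singleton_self a)
  have hna : ∀ n : ℤ, n ≠ 0 → n • a ∉ L := by
    intro n hn hmem
    apply hr
    have hpf : ∀ x : L', n • (x : Fin d → ℤ) ∈ L := by
      rintro ⟨x, hx⟩
      rw [hL'eq] at hx
      obtain ⟨y, hy, z, hz, rfl⟩ := Submodule.mem_sup.mp hx
      obtain ⟨c, rfl⟩ := Submodule.mem_span_singleton.mp hy
      have : n • ((c • a + z : Fin d → ℤ)) = c • (n • a) + n • z := by
        rw [smul_add, smul_comm]
      rw [this]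
      exact add_mem (Submodule.smul_mem _ _ hmem) (Submodule.smul_mem _ _ hz)
    set f : L' →ₗ[ℤ] L := LinearMap.codRestrict L (n • L'.subtype) hpf with hf
    have hfinj : Function.Injective f := by
      intro x y hxy
      have h2 : n • (x : Fin d → ℤ) = n • (y : Fin d → ℤ) := congrArg Subtype.val hxy
      exact Subtype.ext (smul_right_injective (Fin d → ℤ) hn h2)
    have hle2 : Module.rank ℤ L' ≤ Module.rank ℤ L := LinearMap.rank_le_of_injective f hfinj
    have hle1 : Module.rank ℤ L ≤ Module.rank ℤ L' := Submodule.rank_mono hLL'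
    have : Module.rank ℤ L = Module.rank ℤ L' := le_antisymm hle1 hle2
    show finrank ℤ L = finrank ℤ L'
    unfold Module.finrank
    rw [this]
  have ha0 : a ≠ 0 := by
    intro h0
    exact hna 1 one_ne_zero (by rw [h0, smul_zero]; exact zero_mem L)
  -- build a basis of `L'` from the chosen basis of `L` together with `a`
  set b := chooseBasis ℤ L with hb
  set ι := ChooseBasisIndex ℤ L with hι
  set w : Unit ⊕ ι → (Fin d → ℤ) :=
    Sum.elim (fun _ => a) (fun i => ((b i : Fin d → ℤ))) with hw
  have hspanb : Submodule.span ℤ (Set.range (fun i : ι => ((b i : Fin d → ℤ)))) = L := by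
    have hrg : Set.range (fun i : ι => ((b i : Fin d → ℤ))) = L.subtype '' Set.range ⇑b := by
      rw [← Set.range_comp]; rfl
    rw [hrg, ← Submodule.map_span, b.span_eq, Submodule.map_top, Submodule.range_subtype]
  have hw_li : LinearIndependent ℤ w := by
    apply LinearIndependent.sum_type
    · exact linearIndependent_unique_iff.mpr ha0
    · exact b.linearIndependent.map' L.subtype L.ker_subtype
    · rw [Set.range_const, hspanb]
      rw [disjoint_def]
      intro x hxa hxL
      obtain ⟨c, rfl⟩ := Submodule.mem_span_singleton.mp hxa
      rcases eq_or_ne c 0 with rfl | hc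
      · simp
      · exact absurd hxL (hna c hc)
  set v : Unit ⊕ ι → L' :=
    Sum.elim (fun _ => (⟨a, haL'⟩ : L')) (fun i => (⟨(b i : Fin d → ℤ), hLL' (b i).2⟩ : L'))
    with hv
  have hv_li : LinearIndependent ℤ v := by
    apply LinearIndependent.of_comp L'.subtype
    have hcomp : (⇑L'.subtype ∘ v) = w := by funext j; cases j <;> rfl
    rw [hcomp]; exact hw_li
  have hv_sp : ⊤ ≤ Submodule.span ℤ (Set.range v) := by
    rintro ⟨x, hx⟩ -
    have hx' := hx
    rw [hL'eq] at hx'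
    obtain ⟨y, hy, z, hz, hxyz⟩ := Submodule.mem_sup.mp hx'
    obtain ⟨c, rfl⟩ := Submodule.mem_span_singleton.mp hy
    have hz_mem : (⟨z, hLL' hz⟩ : L') ∈ Submodule.span ℤ (Set.range v) := by
      have hzeq : (⟨z, hLL' hz⟩ : L') = ∑ i, (b.repr ⟨z, hz⟩ i) • v (Sum.inr i) := by
        apply Subtype.ext
        have h1 : z = ((⟨z, hz⟩ : L) : Fin d → ℤ) := rfl
        have h2 : ((⟨z, hz⟩ : L) : Fin d → ℤ) =
            (((∑ i, b.repr ⟨z, hz⟩ i • b i) : L) : Fin d → ℤ) := by rw [b.sum_repr]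
        calc (z : Fin d → ℤ) = (((∑ i, b.repr ⟨z, hz⟩ i • b i) : L) : Fin d → ℤ) :=
              h1.trans h2
        _ = ∑ i, b.repr ⟨z, hz⟩ i • ((b i : Fin d → ℤ)) := by push_cast; rfl
        _ = ((∑ i, (b.repr ⟨z, hz⟩ i) • v (Sum.inr i) : L') : Fin d → ℤ) := by push_cast; rfl
      rw [hzeq]
      exact Submodule.sum_mem _ fun i _ =>
        Submodule.smul_mem _ _ (Submodule.subset_span ⟨Sum.inr i, rfl⟩)
    have hxeq : (⟨x, hx⟩ : L') = c • v (Sum.inl ()) + (⟨z, hLL' hz⟩ : L') := by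
      apply Subtype.ext
      push_cast
      rw [← hxyz]
      rfl
    rw [hxeq]
    exact add_mem (Submodule.smul_mem _ _ (Submodule.subset_span ⟨Sum.inl (), rfl⟩)) hz_mem
  set b' : Basis (Unit ⊕ ι) ℤ L' := Basis.mk hv_li hv_sp with hb'
  -- coordinates
  set S : Set (ι → ℝ) := coordOf b '' (insert (0 : Fin d → ℤ) (F : Set (Fin d → ℤ))) with hS
  have h0S : (0 : ι → ℝ) ∈ S := by
    refine ⟨0, Set.mem_insert _ _, ?_⟩
    rw [coordOf_apply b (zero_mem L)]
    have : (⟨(0 : Fin d → ℤ), zero_mem L⟩ : L) = 0 := rfl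
    rw [this]
    funext i
    simp
  have hcoord_a : coordOf b' a = Sum.elim (fun _ => (1 : ℝ)) (0 : ι → ℝ) := by
    rw [coordOf_apply b' haL']
    have : (⟨a, haL'⟩ : L') = b' (Sum.inl ()) := by rw [hb', Basis.mk_apply]; rfl
    rw [this, b'.repr_self]
    funext j
    cases j with
    | inl u => simp [Finsupp.single_apply]
    | inr i => simp [Finsupp.single_apply]
  have hcoord_z : ∀ z ∈ insert (0 : Fin d → ℤ) (F : Set (Fin d → ℤ)),
      coordOf b' z = Sum.elim (fun _ => (0 : ℝ)) (coordOf b z) := by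
    intro z hzX
    have hz : z ∈ L := by
      rcases hzX with rfl | hzF
      · exact zero_mem L
      · exact Submodule.subset_span hzF
    have hcz : (⟨z, hLL' hz⟩ : L') =
        ∑ j, (Sum.elim (0 : Unit → ℤ) (fun i => b.repr ⟨z, hz⟩ i) j) • b' j := by
      rw [Fintype.sum_sum_type]
      simp only [Sum.elim_inl, Sum.elim_inr, Pi.zero_apply, zero_smul, Finset.sum_const_zero,
        zero_add]
      apply Subtype.ext
      have h2 : ((⟨z, hz⟩ : L) : Fin d → ℤ) =
          (((∑ i, b.repr ⟨z, hz⟩ i • b i) : L) : Fin d → ℤ) := by rw [b.sum_repr]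
      calc (z : Fin d → ℤ) = (((∑ i, b.repr ⟨z, hz⟩ i • b i) : L) : Fin d → ℤ) := h2
      _ = ∑ i, b.repr ⟨z, hz⟩ i • ((b i : Fin d → ℤ)) := by push_cast; rfl
      _ = ((∑ i, (b.repr ⟨z, hz⟩ i) • b' (Sum.inr i) : L') : Fin d → ℤ) := by
            rw [hb']
            push_cast [Basis.mk_apply]
            rfl
    rw [coordOf_apply b' (hLL' hz), coordOf_apply b hz, hcz, b'.repr_sum_self]
    funext j
    cases j with
    | inl u => simp
    | inr i => simp
  -- the linear projection to ℝ × (ι → ℝ)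
  set Φ : (Unit ⊕ ι → ℝ) →ₗ[ℝ] ℝ × (ι → ℝ) :=
    LinearMap.prod (LinearMap.proj (Sum.inl ())) (LinearMap.funLeft ℝ ℝ Sum.inr) with hΦ
  set φm : (Unit ⊕ ι → ℝ) ≃ᵐ ℝ × (ι → ℝ) :=
    (MeasurableEquiv.sumPiEquivProdPi (fun _ : Unit ⊕ ι => ℝ)).trans
      (MeasurableEquiv.prodCongr (MeasurableEquiv.funUnique Unit ℝ)
        (MeasurableEquiv.refl (ι → ℝ))) with hφm
  have hΦcoe : ⇑Φ = ⇑φm := by funext x; rfl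
  have hφmp : MeasurePreserving ⇑φm volume volume := by
    have h1 := volume_measurePreserving_sumPiEquivProdPi (fun _ : Unit ⊕ ι => ℝ)
    have h2 : MeasurePreserving
        (⇑(MeasurableEquiv.prodCongr (MeasurableEquiv.funUnique Unit ℝ)
          (MeasurableEquiv.refl (ι → ℝ)))) volume volume := by
      have hcoe2 : ⇑(MeasurableEquiv.prodCongr (MeasurableEquiv.funUnique Unit ℝ)
          (MeasurableEquiv.refl (ι → ℝ))) =
          Prod.map ⇑(MeasurableEquiv.funUnique Unit ℝ) id := by funext p; rfl
      rw [hcoe2, MeasureTheory.Measure.volume_eq_prod, MeasureTheory.Measure.volume_eq_prod]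
      exact (volume_preserving_funUnique Unit ℝ).prod (MeasurePreserving.id volume)
    exact h2.comp h1
  set T : Set (Unit ⊕ ι → ℝ) := coordOf b' ''
    (insert (0 : Fin d → ℤ) (((insert a F : Finset (Fin d → ℤ))) : Set (Fin d → ℤ))) with hT
  have hTfin : T.Finite := (((insert a F).finite_toSet).insert _).image _
  have hTmeas : MeasurableSet (convexHull ℝ T) :=
    (hTfin.isCompact_convexHull ℝ).isClosed.measurableSet
  have hSfin : S.Finite := ((F.finite_toSet).insert _).image _
  have hTimg : ⇑Φ '' T =
      insert ((1 : ℝ), (0 : ι → ℝ)) ((fun x : ι → ℝ => ((0 : ℝ), x)) '' S) := by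
    rw [hT, Finset.coe_insert, Set.insert_comm, Set.image_insert_eq, Set.image_insert_eq]
    congr 1
    · rw [hcoord_a]
      apply Prod.ext
      · rfl
      · funext i; rfl
    · rw [hS, Set.image_image, Set.image_image]
      apply Set.image_congr
      intro z hzX
      rw [hcoord_z z hzX]
      apply Prod.ext
      · rfl
      · funext i; rfl
  have hmain : volume (convexHull ℝ T) =
      ENNReal.ofReal (1 / (Fintype.card ι + 1)) * volume (convexHull ℝ S) := by
    have h1 : volume (convexHull ℝ T) = volume (⇑Φ '' convexHull ℝ T) := by
      rw [hΦcoe, MeasurableEquiv.image_eq_preimage_symm]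
      exact ((hφmp.symm φm).measure_preimage hTmeas.nullMeasurableSet).symm
    rw [h1, Φ.image_convexHull, hTimg]
    exact cone_vol S hSfin h0S
  have hfinF : simpVol F = (Nat.factorial (Fintype.card ι)) *
      (volume (convexHull ℝ S)).toReal := simpVol_eq_basis F b
  have hfinT : simpVol (insert a F) = (Nat.factorial (Fintype.card (Unit ⊕ ι))) *
      (volume (convexHull ℝ T)).toReal := simpVol_eq_basis (insert a F) b'
  rw [hfinF, hfinT, hmain, ENNReal.toReal_mul, ENNReal.toReal_ofReal (by positivity)]
  have hcard : Fintype.card (Unit ⊕ ι) = Fintype.card ι + 1 := by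
    rw [Fintype.card_sum, Fintype.card_unit]
    omega
  rw [hcard]
  apply le_of_eq
  rw [Nat.factorial_succ]
  have hne : ((Fintype.card ι : ℝ) + 1) ≠ 0 := by positivity
  push_cast
  field_simp

end SimpVolAux

theorem simpVol_mono_of_subset {d : ℕ} (A F : Finset (Fin d → ℤ)) (hFA : F ⊆ A) :
    simpVol F ≤ simpVol A := by
  classical
  obtain ⟨n, hn⟩ : ∃ n, (A \ F).card = n := ⟨_, rfl⟩
  induction n generalizing F with
  | zero =>
    have : A \ F = ∅ := Finset.card_eq_zero.mp hn
    have : A ⊆ F := fun x hx => by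
      by_contra hxF
      exact absurd (Finset.mem_sdiff.mpr ⟨hx, hxF⟩) (by simp [this])
    have : F = A := Finset.Subset.antisymm hFA this
    simp [this]
  | succ n ih =>
    have hne : (A \ F).Nonempty := by
      rw [← Finset.card_pos, hn]; exact Nat.succ_pos n
    obtain ⟨a, ha⟩ := hne
    rw [Finset.mem_sdiff] at ha
    refine le_trans (SimpVolAux.simpVol_le_insert F a) (ih (insert a F) ?_ ?_)
    · intro x hx
      rcases Finset.mem_insert.mp hx with rfl | hx
      · exact ha.1
      · exact hFA hx
    · rw [Finset.sdiff_insert, Finset.card_erase_of_mem (Finset.mem_sdiff.mpr ha), hn]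
      simp
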